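/- Let S₀ determine a strictly weak, left invariant sub-Finsler metric on a Hilbertian H-type group M = V ⊕ W. Then for all p, q ∈ M with π₁(p) = π₁(q) the sub-Finsler distance satisfies ρ_S(p,q) = 0; that is, for every ε > 0 there exists a horizontal curve γ with γ(0) = p, γ(1) = q and ℓ_S(γ) < ε. -/

import Mathlib

open scoped RealInnerProductSpace

/-- A Hilbertian H-type group: a real Hilbert space `M` with an orthogonal decomposition
`M = V ⊕ W` into nontrivial closed subspaces, `W` finite dimensional, a continuous
skew-symmetric Lie bracket with `[M,M] ⊆ W`, `[M,W] = 0`, and the map `J` determined by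
`⟪J z x, y⟫ = ⟪z, [x,y]⟫` satisfying `J_z ∘ J_z = -‖z‖² id` on `V`. -/
structure HTypeGroup (M : Type*) [NormedAddCommGroup M] [InnerProductSpace ℝ M]
    [CompleteSpace M] where
  V : Submodule ℝ M
  W : Submodule ℝ M
  V_closed : IsClosed (V : Set M)
  W_closed : IsClosed (W : Set M)
  V_nontrivial : V ≠ ⊥
  W_nontrivial : W ≠ ⊥
  W_findim : FiniteDimensional ℝ ↥W
  orthogonal : ∀ v ∈ V, ∀ w ∈ W, ⟪v, w⟫ = 0
  proj1 : M →L[ℝ] M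
  proj2 : M →L[ℝ] M
  proj1_mem : ∀ v : M, proj1 v ∈ V
  proj2_mem : ∀ v : M, proj2 v ∈ W
  proj_add : ∀ v : M, proj1 v + proj2 v = v
  bracket : M →L[ℝ] M →L[ℝ] M
  bracket_skew : ∀ u v : M, bracket u v = - bracket v u
  bracket_mem_W : ∀ u v : M, bracket u v ∈ W
  bracket_W : ∀ u : M, ∀ w ∈ W, bracket u w = 0
  Jmap : M →L[ℝ] M →L[ℝ] M
  Jmap_mem_V : ∀ z ∈ W, ∀ x ∈ V, Jmap z x ∈ V
  Jmap_inner : ∀ z ∈ W, ∀ x ∈ V, ∀ y ∈ V, ⟪Jmap z x, y⟫ = ⟪z, bracket x y⟫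
  Jmap_sq : ∀ z ∈ W, ∀ x ∈ V, Jmap z (Jmap z x) = -(‖z‖ ^ 2) • x

/-- A continuous, piecewise continuously differentiable curve on `[0,1]`: a continuous
curve together with a derivative function which is the honest derivative away from a
finite exceptional set, and which is interval integrable. -/
structure PC1Curve (M : Type*) [NormedAddCommGroup M] [NormedSpace ℝ M] where
  toFun : ℝ → M
  deriv : ℝ → M
  continuousOn : ContinuousOn toFun (Set.Icc 0 1)
  exc : Set ℝ
  exc_finite : exc.Finite
  hasDeriv : ∀ t ∈ Set.Ioo (0 : ℝ) 1 \ exc, HasDerivAt toFun (deriv t) t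
  deriv_integrable : IntervalIntegrable deriv MeasureTheory.volume 0 1

/-- A horizontal curve: a piecewise `C¹` curve `γ = γ₁ + γ₂` (with `γᵢ = πᵢ ∘ γ`) such that
`γ₂'(t) = (1/2)[γ₁(t), γ₁'(t)]` wherever the derivative exists. -/
def IsHorizontal {M : Type*} [NormedAddCommGroup M] [InnerProductSpace ℝ M]
    [CompleteSpace M] (H : HTypeGroup M) (γ : PC1Curve M) : Prop :=
  ∀ t ∈ Set.Ioo (0 : ℝ) 1 \ γ.exc,
    H.proj2 (γ.deriv t) = (2⁻¹ : ℝ) • H.bracket (H.proj1 (γ.toFun t)) (H.proj1 (γ.deriv t))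

/-- The sub-Finsler length `ℓ_S(γ) = ∫₀¹ S₀(γ₁'(t)) dt` of a curve, with respect to the
left invariant sub-Finsler metric determined by the norm `S₀` on `V`. -/
noncomputable def subFinslerLength {M : Type*} [NormedAddCommGroup M] [InnerProductSpace ℝ M]
    [CompleteSpace M] (H : HTypeGroup M) (S₀ : M → ℝ) (γ : PC1Curve M) : ℝ :=
  ∫ t in (0 : ℝ)..1, S₀ (H.proj1 (γ.deriv t))

/-- The sub-Finsler distance `ρ_S(p, q)`: the infimum of the sub-Finsler lengths of
horizontal curves joining `p` to `q`. -/
noncomputable def subFinslerDist {M : Type*} [NormedAddCommGroup M] [InnerProductSpace ℝ M]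
    [CompleteSpace M] (H : HTypeGroup M) (S₀ : M → ℝ) (p q : M) : ℝ :=
  sInf {L : ℝ | ∃ γ : PC1Curve M, IsHorizontal H γ ∧ γ.toFun 0 = p ∧ γ.toFun 1 = q ∧
    L = subFinslerLength H S₀ γ}
section Aux
open scoped Real
variable {M : Type*} [NormedAddCommGroup M] [InnerProductSpace ℝ M] [CompleteSpace M]
  (H : HTypeGroup M)

lemma HT.mem_inf_eq_zero {x : M} (hV : x ∈ H.V) (hW : x ∈ H.W) : x = 0 :=
  inner_self_eq_zero.mp (H.orthogonal x hV x hW)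

lemma HT.proj2_of_V {v : M} (hv : v ∈ H.V) : H.proj2 v = 0 := by
  have h1 : H.proj2 v = v - H.proj1 v := eq_sub_of_add_eq' (H.proj_add v)
  have h2 : H.proj2 v ∈ H.V := h1 ▸ H.V.sub_mem hv (H.proj1_mem v)
  exact HT.mem_inf_eq_zero H h2 (H.proj2_mem v)

lemma HT.proj1_of_V {v : M} (hv : v ∈ H.V) : H.proj1 v = v := by
  have := H.proj_add v; rw [HT.proj2_of_V H hv] at this; simpa using this

lemma HT.proj1_of_W {w : M} (hw : w ∈ H.W) : H.proj1 w = 0 := by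
  have h1 : H.proj1 w = w - H.proj2 w := eq_sub_of_add_eq (H.proj_add w)
  have h2 : H.proj1 w ∈ H.W := h1 ▸ H.W.sub_mem hw (H.proj2_mem w)
  exact HT.mem_inf_eq_zero H (H.proj1_mem w) h2

lemma HT.proj2_of_W {w : M} (hw : w ∈ H.W) : H.proj2 w = w := by
  have := H.proj_add w; rw [HT.proj1_of_W H hw] at this; simpa using this

lemma HT.bracket_self (x : M) : H.bracket x x = 0 := by
  have h := H.bracket_skew x x
  have h2 : (2:ℝ) • H.bracket x x = 0 := by
    rw [two_smul]; nth_rewrite 2 [h]; simp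
  simpa using (smul_eq_zero.mp h2).resolve_left (by norm_num)

lemma HT.J_skew {z x y : M} (hz : z ∈ H.W) (hx : x ∈ H.V) (hy : y ∈ H.V) :
    ⟪H.Jmap z x, y⟫ = -⟪x, H.Jmap z y⟫ := by
  rw [H.Jmap_inner z hz x hx y hy, H.bracket_skew x y, inner_neg_right,
    ← H.Jmap_inner z hz y hy x hx, real_inner_comm]

lemma HT.J_anticomm {z w a : M} (hz : z ∈ H.W) (hw : w ∈ H.W) (ha : a ∈ H.V) :
    H.Jmap z (H.Jmap w a) + H.Jmap w (H.Jmap z a) = (-(2 * ⟪z, w⟫)) • a := by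
  have h1 := H.Jmap_sq (z + w) (H.W.add_mem hz hw) a ha
  have h2 := H.Jmap_sq z hz a ha
  have h3 := H.Jmap_sq w hw a ha
  have hnorm : ‖z + w‖ ^ 2 = ‖z‖^2 + 2 * ⟪z,w⟫ + ‖w‖^2 := norm_add_sq_real z w
  rw [map_add] at h1
  simp only [ContinuousLinearMap.add_apply, map_add] at h1
  rw [h2, h3, hnorm] at h1
  have h4 : H.Jmap z (H.Jmap w a) + H.Jmap w (H.Jmap z a)
      = -((‖z‖^2 + 2*⟪z,w⟫ + ‖w‖^2)) • a - (-(‖z‖^2) • a) - (-(‖w‖^2) • a) := by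
    rw [← h1]; abel
  rw [h4]; match_scalars; ring

lemma HT.inner_J_J {z w a : M} (hz : z ∈ H.W) (hw : w ∈ H.W) (ha : a ∈ H.V) :
    ⟪H.Jmap z a, H.Jmap w a⟫ = ⟪z, w⟫ * ‖a‖^2 := by
  have hJw : H.Jmap w a ∈ H.V := H.Jmap_mem_V w hw a ha
  have hJz : H.Jmap z a ∈ H.V := H.Jmap_mem_V z hz a ha
  have h1 : ⟪H.Jmap z a, H.Jmap w a⟫ = -⟪a, H.Jmap z (H.Jmap w a)⟫ :=
    HT.J_skew H hz ha hJw
  have h2 : ⟪H.Jmap z a, H.Jmap w a⟫ = -⟪a, H.Jmap w (H.Jmap z a)⟫ := by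
    rw [real_inner_comm]; exact HT.J_skew H hw ha hJz
  have h4 : ⟪a, H.Jmap z (H.Jmap w a) + H.Jmap w (H.Jmap z a)⟫ = -(2*⟪z,w⟫) * ⟪a,a⟫ := by
    rw [HT.J_anticomm H hz hw ha, real_inner_smul_right]
  rw [inner_add_right, real_inner_self_eq_norm_sq] at h4
  linarith [h1, h2, h4]

lemma HT.bracket_J {w a : M} (hw : w ∈ H.W) (ha : a ∈ H.V) :
    H.bracket a (H.Jmap w a) = ‖a‖^2 • w := by
  have hz : ∀ z ∈ H.W, ⟪z, H.bracket a (H.Jmap w a)⟫ = ⟪z, w⟫ * ‖a‖^2 := by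
    intro z hzW
    rw [← H.Jmap_inner z hzW a ha (H.Jmap w a) (H.Jmap_mem_V w hw a ha)]
    exact HT.inner_J_J H hzW hw ha
  set u := H.bracket a (H.Jmap w a) - ‖a‖^2 • w with hu
  have huW : u ∈ H.W := H.W.sub_mem (H.bracket_mem_W _ _) (H.W.smul_mem _ hw)
  have h0 : ⟪u, u⟫ = 0 := by
    rw [hu, inner_sub_right, hz u huW, real_inner_smul_right]; ring
  have := inner_self_eq_zero.mp h0
  rw [hu] at this; exact sub_eq_zero.mp this
end Aux
set_option linter.unusedSectionVars false
section Curve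
open scoped Real
variable {M : Type*} [NormedAddCommGroup M] [InnerProductSpace ℝ M] [CompleteSpace M]

noncomputable def etaF (a b : M) (t : ℝ) : M :=
  (Real.cos (2*π*t) - 1) • a + Real.sin (2*π*t) • b

noncomputable def etaF' (a b : M) (t : ℝ) : M :=
  (-(2*π*Real.sin (2*π*t))) • a + (2*π*Real.cos (2*π*t)) • b

noncomputable def zetaF (H : HTypeGroup M) (p a b : M) (t : ℝ) : M :=
  (2⁻¹:ℝ) • H.bracket (H.proj1 p) (etaF a b t)
    + (π*t - 2⁻¹*Real.sin (2*π*t)) • H.bracket a b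

noncomputable def zetaF' (H : HTypeGroup M) (p a b : M) (t : ℝ) : M :=
  (2⁻¹:ℝ) • H.bracket (H.proj1 p) (etaF' a b t)
    + (π - π*Real.cos (2*π*t)) • H.bracket a b

lemma hasDerivAt_etaF (a b : M) (t : ℝ) : HasDerivAt (etaF a b) (etaF' a b t) t := by
  have hc : HasDerivAt (fun s : ℝ => Real.cos (2*π*s) - 1) (-(2*π*Real.sin (2*π*t))) t := by
    have := (((hasDerivAt_id t).const_mul (2*π)).cos).sub_const 1
    simp only [id_eq] at this; exact this.congr_deriv (by ring)
  have hs : HasDerivAt (fun s : ℝ => Real.sin (2*π*s)) (2*π*Real.cos (2*π*t)) t := by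
    have := ((hasDerivAt_id t).const_mul (2*π)).sin
    simp only [id_eq] at this; convert this using 1; ring
  exact (hc.smul_const a).add (hs.smul_const b)

lemma hasDerivAt_zetaF (H : HTypeGroup M) (p a b : M) (t : ℝ) :
    HasDerivAt (zetaF H p a b) (zetaF' H p a b t) t := by
  have h1 : HasDerivAt (fun s => H.bracket (H.proj1 p) (etaF a b s))
      (H.bracket (H.proj1 p) (etaF' a b t)) t :=
    (H.bracket (H.proj1 p)).hasFDerivAt.comp_hasDerivAt t (hasDerivAt_etaF a b t)
  have h2 : HasDerivAt (fun s : ℝ => π*s - 2⁻¹*Real.sin (2*π*s))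
      (π - π*Real.cos (2*π*t)) t := by
    have := ((hasDerivAt_id t).const_mul π).sub
      (((((hasDerivAt_id t).const_mul (2*π)).sin)).const_mul (2⁻¹:ℝ))
    simp only [id_eq] at this; exact this.congr_deriv (by ring)
  exact (h1.const_smul (2⁻¹:ℝ)).add (h2.smul_const (H.bracket a b))

lemma continuous_etaF' (a b : M) : Continuous (etaF' a b) := by
  unfold etaF'; fun_prop

lemma continuous_zetaF' (H : HTypeGroup M) (p a b : M) : Continuous (zetaF' H p a b) := by
  unfold zetaF'
  apply Continuous.add
  · exact ((H.bracket (H.proj1 p)).continuous.comp (continuous_etaF' a b)).const_smul _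
  · fun_prop

lemma etaF_mem (H : HTypeGroup M) {a b : M} (ha : a ∈ H.V) (hb : b ∈ H.V) (t : ℝ) :
    etaF a b t ∈ H.V := H.V.add_mem (H.V.smul_mem _ ha) (H.V.smul_mem _ hb)

lemma etaF'_mem (H : HTypeGroup M) {a b : M} (ha : a ∈ H.V) (hb : b ∈ H.V) (t : ℝ) :
    etaF' a b t ∈ H.V := H.V.add_mem (H.V.smul_mem _ ha) (H.V.smul_mem _ hb)

lemma zetaF_mem (H : HTypeGroup M) (p a b : M) (t : ℝ) : zetaF H p a b t ∈ H.W :=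
  H.W.add_mem (H.W.smul_mem _ (H.bracket_mem_W _ _)) (H.W.smul_mem _ (H.bracket_mem_W _ _))

lemma zetaF'_mem (H : HTypeGroup M) (p a b : M) (t : ℝ) : zetaF' H p a b t ∈ H.W :=
  H.W.add_mem (H.W.smul_mem _ (H.bracket_mem_W _ _)) (H.W.smul_mem _ (H.bracket_mem_W _ _))

lemma bracket_etaF (H : HTypeGroup M) (a b : M) (t : ℝ) :
    H.bracket (etaF a b t) (etaF' a b t)
      = (2*π*(1 - Real.cos (2*π*t))) • H.bracket a b := by
  have hba : H.bracket b a = -H.bracket a b := H.bracket_skew b a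
  have haa : H.bracket a a = 0 := HT.bracket_self H a
  have hbb : H.bracket b b = 0 := HT.bracket_self H b
  simp only [etaF, etaF', map_add, map_smul, ContinuousLinearMap.add_apply,
    ContinuousLinearMap.coe_smul', Pi.smul_apply, haa, hbb, hba, smul_zero,
    smul_neg, add_zero, zero_add, smul_smul]
  match_scalars
  linear_combination (2*π) * Real.sin_sq_add_cos_sq (2*π*t)

lemma etaF_zero (a b : M) : etaF a b 0 = 0 := by
  simp [etaF]

lemma etaF_one (a b : M) : etaF a b 1 = 0 := by
  simp [etaF, Real.cos_two_pi, Real.sin_two_pi, mul_one]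

lemma zetaF_zero (H : HTypeGroup M) (p a b : M) : zetaF H p a b 0 = 0 := by
  simp [zetaF, etaF_zero]

lemma zetaF_one (H : HTypeGroup M) (p a b : M) :
    zetaF H p a b 1 = π • H.bracket a b := by
  simp [zetaF, etaF_one, Real.sin_two_pi, mul_one]
end Curve
section Main
open scoped Real
variable {M : Type*} [NormedAddCommGroup M] [InnerProductSpace ℝ M] [CompleteSpace M]

noncomputable def loopCurve (H : HTypeGroup M) (p a b : M) : PC1Curve M where
  toFun := fun t => p + etaF a b t + zetaF H p a b t
  deriv := fun t => etaF' a b t + zetaF' H p a b t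
  continuousOn := by
    have : Continuous fun t => p + etaF a b t + zetaF H p a b t :=
      continuous_iff_continuousAt.mpr fun t =>
        (((hasDerivAt_etaF a b t).const_add p).add (hasDerivAt_zetaF H p a b t)).continuousAt
    exact this.continuousOn
  exc := ∅
  exc_finite := Set.finite_empty
  hasDeriv := fun t _ => ((hasDerivAt_etaF a b t).const_add p).add (hasDerivAt_zetaF H p a b t)
  deriv_integrable :=
    ((continuous_etaF' a b).add (continuous_zetaF' H p a b)).intervalIntegrable 0 1

lemma loopCurve_horizontal (H : HTypeGroup M) (p a b : M)
    (ha : a ∈ H.V) (hb : b ∈ H.V) : IsHorizontal H (loopCurve H p a b) := by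
  intro t _
  show H.proj2 (etaF' a b t + zetaF' H p a b t)
      = (2⁻¹:ℝ) • H.bracket (H.proj1 (p + etaF a b t + zetaF H p a b t))
          (H.proj1 (etaF' a b t + zetaF' H p a b t))
  have hp2 : H.proj2 (etaF' a b t + zetaF' H p a b t) = zetaF' H p a b t := by
    rw [map_add, HT.proj2_of_V H (etaF'_mem H ha hb t),
      HT.proj2_of_W H (zetaF'_mem H p a b t), zero_add]
  have hp1d : H.proj1 (etaF' a b t + zetaF' H p a b t) = etaF' a b t := by
    rw [map_add, HT.proj1_of_V H (etaF'_mem H ha hb t),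
      HT.proj1_of_W H (zetaF'_mem H p a b t), add_zero]
  have hp1g : H.proj1 (p + etaF a b t + zetaF H p a b t) = H.proj1 p + etaF a b t := by
    rw [map_add, map_add, HT.proj1_of_V H (etaF_mem H ha hb t),
      HT.proj1_of_W H (zetaF_mem H p a b t), add_zero]
  rw [hp2, hp1d, hp1g, map_add, ContinuousLinearMap.add_apply, bracket_etaF H a b t]
  show zetaF' H p a b t = _
  unfold zetaF'
  rw [smul_add, smul_smul]
  congr 1
  match_scalars; ring

lemma loopCurve_start (H : HTypeGroup M) (p a b : M) : (loopCurve H p a b).toFun 0 = p := by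
  show p + etaF a b 0 + zetaF H p a b 0 = p
  rw [etaF_zero, zetaF_zero]; simp

lemma loopCurve_end (H : HTypeGroup M) (p a b : M) :
    (loopCurve H p a b).toFun 1 = p + π • H.bracket a b := by
  show p + etaF a b 1 + zetaF H p a b 1 = _
  rw [etaF_one, zetaF_one]; simp

lemma loopCurve_proj1_deriv (H : HTypeGroup M) (p a b : M)
    (ha : a ∈ H.V) (hb : b ∈ H.V) (t : ℝ) :
    H.proj1 ((loopCurve H p a b).deriv t) = etaF' a b t := by
  show H.proj1 (etaF' a b t + zetaF' H p a b t) = etaF' a b t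
  rw [map_add, HT.proj1_of_V H (etaF'_mem H ha hb t),
    HT.proj1_of_W H (zetaF'_mem H p a b t), add_zero]
end Main

open scoped Real

set_option maxHeartbeats 1000000 in

/-- For a strictly weak, left invariant sub-Finsler metric `S₀` on a
Hilbertian H-type group `M = V ⊕ W`, whenever `π₁(p) = π₁(q)` the sub-Finsler distance
vanishes: `ρ_S(p, q) = 0`; that is, for every `ε > 0` there is a horizontal curve from
`p` to `q` of sub-Finsler length `< ε`. -/
theorem statement_8 {M : Type*} [NormedAddCommGroup M] [InnerProductSpace ℝ M]
    [CompleteSpace M] (H : HTypeGroup M) (S₀ : M → ℝ)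
    (hS_add : ∀ u ∈ H.V, ∀ v ∈ H.V, S₀ (u + v) ≤ S₀ u + S₀ v)
    (hS_smul : ∀ (c : ℝ), ∀ v ∈ H.V, S₀ (c • v) = |c| * S₀ v)
    (hS_def : ∀ v ∈ H.V, S₀ v = 0 → v = 0)
    (c₀ : ℝ) (hc₀ : 0 < c₀) (hS_cont : ∀ v ∈ H.V, S₀ v ≤ c₀ * ‖v‖)
    (h_strictly_weak : ¬ ∃ c > (0 : ℝ), ∀ v ∈ H.V, c * ‖v‖ ≤ S₀ v) :
    ∀ p q : M, H.proj1 p = H.proj1 q →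
      subFinslerDist H S₀ p q = 0 ∧
      ∀ ε > (0 : ℝ), ∃ γ : PC1Curve M, IsHorizontal H γ ∧ γ.toFun 0 = p ∧ γ.toFun 1 = q ∧
        subFinslerLength H S₀ γ < ε := by
  intro p q hpq
  have hπ : (0:ℝ) < π := Real.pi_pos
  have hS0 : S₀ (0:M) = 0 := by
    have := hS_smul 0 0 H.V.zero_mem
    simpa using this
  have hSnn : ∀ v ∈ H.V, 0 ≤ S₀ v := by
    intro v hv
    have h1 : S₀ ((-1:ℝ) • v) = S₀ v := by rw [hS_smul _ _ hv]; simp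
    have h2 := hS_add v hv ((-1:ℝ) • v) (H.V.smul_mem _ hv)
    have h3 : v + (-1:ℝ) • v = 0 := by module
    rw [h3, hS0, h1] at h2
    linarith
  obtain ⟨w, hw⟩ : ∃ w, w = q - p := ⟨q - p, rfl⟩
  have hwW : w ∈ H.W := by
    have h1 : H.proj1 w = 0 := by rw [hw, map_sub, hpq, sub_self]
    have h2 := H.proj_add w
    rw [h1, zero_add] at h2
    exact h2 ▸ H.proj2_mem w
  have hq : q = p + w := by rw [hw]; abel
  have hex : ∀ ε > (0:ℝ), ∃ γ : PC1Curve M, IsHorizontal H γ ∧ γ.toFun 0 = p ∧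
      γ.toFun 1 = q ∧ subFinslerLength H S₀ γ < ε := by
    intro ε hε
    obtain ⟨D, hD⟩ : ∃ D, D = c₀ * ‖H.Jmap‖ * ‖w‖ := ⟨_, rfl⟩
    have hD0 : 0 ≤ D := by rw [hD]; positivity
    obtain ⟨R, hR⟩ : ∃ R, R = (4*D+1)/ε := ⟨_, rfl⟩
    have hR0 : 0 < R := by rw [hR]; positivity
    obtain ⟨c, hc⟩ : ∃ c, c = ε/(8*π*R) := ⟨_, rfl⟩
    have hcpos : 0 < c := by rw [hc]; positivity
    obtain ⟨v, hvV, hv⟩ : ∃ v ∈ H.V, S₀ v < c * ‖v‖ := by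
      by_contra hcon; push_neg at hcon
      exact h_strictly_weak ⟨c, hcpos, hcon⟩
    have hvn : 0 < ‖v‖ := by
      by_contra hcon
      push_neg at hcon
      have h0 : ‖v‖ = 0 := le_antisymm hcon (norm_nonneg v)
      have hv0 : v = 0 := norm_eq_zero.mp h0
      rw [hv0, hS0, norm_zero, mul_zero] at hv
      exact lt_irrefl 0 hv
    obtain ⟨a, haDef⟩ : ∃ a, a = (R / ‖v‖) • v := ⟨_, rfl⟩
    have haV : a ∈ H.V := haDef ▸ H.V.smul_mem _ hvV
    have hna : ‖a‖ = R := by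
      rw [haDef, norm_smul, Real.norm_eq_abs, abs_of_pos (div_pos hR0 hvn)]
      exact div_mul_cancel₀ R hvn.ne'
    have hSa : S₀ a < c * R := by
      rw [haDef, hS_smul _ _ hvV, abs_of_pos (div_pos hR0 hvn)]
      calc R / ‖v‖ * S₀ v < R / ‖v‖ * (c * ‖v‖) :=
            mul_lt_mul_of_pos_left hv (div_pos hR0 hvn)
        _ = c * (R / ‖v‖ * ‖v‖) := by ring
        _ = c * R := by rw [div_mul_cancel₀ R hvn.ne']
    obtain ⟨b, hbDef⟩ : ∃ b, b = (π * R^2)⁻¹ • H.Jmap w a := ⟨_, rfl⟩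
    have hbV : b ∈ H.V := hbDef ▸ H.V.smul_mem _ (H.Jmap_mem_V w hwW a haV)
    have hnb : ‖b‖ ≤ ‖H.Jmap‖ * ‖w‖ / (π * R) := by
      have h1 : ‖H.Jmap w a‖ ≤ ‖H.Jmap‖ * ‖w‖ * R := by
        calc ‖H.Jmap w a‖ ≤ ‖H.Jmap w‖ * ‖a‖ := (H.Jmap w).le_opNorm a
          _ ≤ ‖H.Jmap‖ * ‖w‖ * ‖a‖ :=
              mul_le_mul_of_nonneg_right (H.Jmap.le_opNorm w) (norm_nonneg a)
          _ = ‖H.Jmap‖ * ‖w‖ * R := by rw [hna]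
      rw [hbDef, norm_smul, Real.norm_eq_abs,
        abs_of_pos (by positivity : (0:ℝ) < (π*R^2)⁻¹)]
      calc (π*R^2)⁻¹ * ‖H.Jmap w a‖ ≤ (π*R^2)⁻¹ * (‖H.Jmap‖ * ‖w‖ * R) :=
            mul_le_mul_of_nonneg_left h1 (by positivity)
        _ = ‖H.Jmap‖ * ‖w‖ / (π * R) := by
            have h1' : (π*R^2 : ℝ) ≠ 0 := by positivity
            have h2' : (π*R : ℝ) ≠ 0 := by positivity
            rw [inv_mul_eq_div, div_eq_div_iff h1' h2']
            ring
    have hSb : S₀ b ≤ D / (π * R) := by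
      calc S₀ b ≤ c₀ * ‖b‖ := hS_cont b hbV
        _ ≤ c₀ * (‖H.Jmap‖ * ‖w‖ / (π * R)) :=
            mul_le_mul_of_nonneg_left hnb (le_of_lt hc₀)
        _ = D / (π * R) := by rw [hD]; ring
    have hab : H.bracket a b = (π:ℝ)⁻¹ • w := by
      rw [hbDef, map_smul, HT.bracket_J H hwW haV, hna, smul_smul]
      congr 1
      have h1' : (π*R^2 : ℝ) ≠ 0 := by positivity
      rw [inv_mul_eq_div, inv_eq_one_div, div_eq_div_iff h1' hπ.ne']
      ring
    refine ⟨loopCurve H p a b, loopCurve_horizontal H p a b haV hbV,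
      loopCurve_start H p a b, ?_, ?_⟩
    · rw [loopCurve_end H p a b, hab, smul_smul,
        mul_inv_cancel₀ (ne_of_gt hπ), one_smul, ← hq]
    · have hSa0 : 0 ≤ S₀ a := hSnn a haV
      have hSb0 : 0 ≤ S₀ b := hSnn b hbV
      have hbound : ∀ t ∈ Set.uIoc (0:ℝ) 1,
          ‖S₀ (H.proj1 ((loopCurve H p a b).deriv t))‖ ≤ 2*π*(S₀ a) + 2*π*(S₀ b) := by
        intro t _
        rw [loopCurve_proj1_deriv H p a b haV hbV t]
        have h1 : S₀ (etaF' a b t) ≤ |(-(2*π*Real.sin (2*π*t)))| * S₀ a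
            + |(2*π*Real.cos (2*π*t))| * S₀ b := by
          unfold etaF'
          calc S₀ _ ≤ S₀ ((-(2*π*Real.sin (2*π*t))) • a)
                + S₀ ((2*π*Real.cos (2*π*t)) • b) :=
                hS_add _ (H.V.smul_mem _ haV) _ (H.V.smul_mem _ hbV)
            _ = _ := by rw [hS_smul _ _ haV, hS_smul _ _ hbV]
        have h2 : |(-(2*π*Real.sin (2*π*t)))| ≤ 2*π := by
          rw [abs_neg, abs_mul, abs_of_pos (by positivity : (0:ℝ) < 2*π)]
          nlinarith [Real.abs_sin_le_one (2*π*t), hπ]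
        have h3 : |(2*π*Real.cos (2*π*t))| ≤ 2*π := by
          rw [abs_mul, abs_of_pos (by positivity : (0:ℝ) < 2*π)]
          nlinarith [Real.abs_cos_le_one (2*π*t), hπ]
        have hnn : 0 ≤ S₀ (etaF' a b t) := hSnn _ (etaF'_mem H haV hbV t)
        rw [Real.norm_eq_abs, abs_of_nonneg hnn]
        nlinarith [h1, h2, h3, hSa0, hSb0, abs_nonneg (-(2*π*Real.sin (2*π*t))),
          abs_nonneg (2*π*Real.cos (2*π*t))]
      have hint := intervalIntegral.norm_integral_le_of_norm_le_const hbound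
      have hC_lt : 2*π*(S₀ a) + 2*π*(S₀ b) < ε := by
        have e1 : 2*π*(S₀ a) < 2*π*(c*R) := by nlinarith [hSa, hπ]
        have e2 : 2*π*(S₀ b) ≤ 2*D/R := by
          have h2' : (π*R : ℝ) ≠ 0 := by positivity
          calc 2*π*(S₀ b) ≤ 2*π*(D/(π*R)) := by nlinarith [hSb, hπ]
            _ = 2*D/R := by
                rw [← mul_div_assoc, div_eq_div_iff h2' hR0.ne']
                ring
        have e3 : 2*π*(c*R) = ε/4 := by
          rw [hc, div_mul_eq_mul_div, ← mul_div_assoc,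
            div_eq_div_iff (by positivity : (8*π*R:ℝ) ≠ 0) (by norm_num : (4:ℝ) ≠ 0)]
          ring
        have e4 : 2*D/R ≤ ε/2 := by
          have h4D : (0:ℝ) < 4*D+1 := by linarith
          rw [hR, div_div_eq_mul_div, div_le_iff₀ h4D]
          nlinarith [hε, hD0]
        linarith
      have habs : subFinslerLength H S₀ (loopCurve H p a b)
          ≤ ‖∫ t in (0:ℝ)..1, S₀ (H.proj1 ((loopCurve H p a b).deriv t))‖ := by
        unfold subFinslerLength
        exact le_abs_self _
      have h10 : |(1:ℝ) - 0| = 1 := by norm_num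
      rw [h10, mul_one] at hint
      exact lt_of_le_of_lt (le_trans habs hint) hC_lt
  refine ⟨?_, hex⟩
  have hnn' : ∀ L ∈ {L : ℝ | ∃ γ : PC1Curve M, IsHorizontal H γ ∧ γ.toFun 0 = p ∧
      γ.toFun 1 = q ∧ L = subFinslerLength H S₀ γ}, 0 ≤ L := by
    rintro L ⟨γ, -, -, -, rfl⟩
    unfold subFinslerLength
    apply intervalIntegral.integral_nonneg (by norm_num)
    intro u _
    exact hSnn _ (H.proj1_mem _)
  have hne : {L : ℝ | ∃ γ : PC1Curve M, IsHorizontal H γ ∧ γ.toFun 0 = p ∧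
      γ.toFun 1 = q ∧ L = subFinslerLength H S₀ γ}.Nonempty := by
    obtain ⟨γ, h1, h2, h3, -⟩ := hex 1 one_pos
    exact ⟨subFinslerLength H S₀ γ, γ, h1, h2, h3, rfl⟩
  have hbdd : BddBelow {L : ℝ | ∃ γ : PC1Curve M, IsHorizontal H γ ∧ γ.toFun 0 = p ∧
      γ.toFun 1 = q ∧ L = subFinslerLength H S₀ γ} := ⟨0, fun L hL => hnn' L hL⟩
  unfold subFinslerDist
  refine le_antisymm ?_ (le_csInf hne hnn')
  by_contra hcon
  push_neg at hcon
  obtain ⟨γ, h1, h2, h3, h4⟩ := hex _ hcon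
  have h5 := csInf_le hbdd (Set.mem_setOf.mpr ⟨γ, h1, h2, h3, rfl⟩)
  linarith
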